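/- In ℤ × ℤ = ⟨a,b⟩, for each n ≥ 1 the commutator [aⁿ, b] is trivial, and in the free product F = ⟨a⟩ ∗ F(b), the element [aⁿ, b] lies in the normal closure N of [a, b] and its image in N/[N, F] (equivalently, the minimal number of conjugates of [a,b]^{±1} whose product equals [aⁿ,b] in F) grows linearly: it is exactly n. -/

import Mathlib

/-- The area of `w` with respect to the relator set `R`: the least `k` such that
`w` is a product of `k` conjugates of elements of `R^{±1}`. -/
noncomputable def relArea {F : Type*} [Group F] (R : Set F) (w : F) : ℕ :=
  sInf {k | ∃ l : List F, l.length = k ∧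
    (∀ x ∈ l, ∃ f r : F, (r ∈ R ∨ r⁻¹ ∈ R) ∧ x = f⁻¹ * r * f) ∧ l.prod = w}

/-- The free product `ℤ ∗ ℤ`, i.e. the free group on two generators. -/
abbrev F2 : Type := FreeGroup Bool

/-- The generator `a`. -/
def fa : F2 := FreeGroup.of true

/-- The generator `b`. -/
def fb : F2 := FreeGroup.of false

/-- The homomorphism onto `ℤ × ℤ` sending `a ↦ (1,0)`, `b ↦ (0,1)`. -/
def abMap : F2 →* Multiplicative (ℤ × ℤ) :=
  FreeGroup.lift fun x => Multiplicative.ofAdd (if x then ((1, 0) : ℤ × ℤ) else (0, 1))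

open scoped commutatorElement

/-! ### Auxiliary material -/

abbrev G2' := Multiplicative (ℤ × ℤ)
abbrev RR := MonoidAlgebra ℤ G2'

def gA : G2' := Multiplicative.ofAdd (1, 0)
def gB : G2' := Multiplicative.ofAdd (0, 1)

@[ext] structure MG where
  g : G2'
  d : RR

lemma gA_ne_one : gA ≠ 1 := by
  intro h
  have : ((1 : ℤ), (0 : ℤ)) = (0, 0) := congrArg Multiplicative.toAdd h
  simp at this

lemma gA_pow_inj : Function.Injective fun j : ℕ => gA ^ j := by
  intro i j h
  have : (i : ℤ) = j := by
    have h2 := congrArg (fun x => (Multiplicative.toAdd x).1) h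
    simpa [toAdd_pow, gA] using h2
  exact_mod_cast this

noncomputable instance : Mul MG := ⟨fun x y => ⟨x.g * y.g, x.d + MonoidAlgebra.single x.g 1 * y.d⟩⟩
noncomputable instance : One MG := ⟨⟨1, 0⟩⟩
noncomputable instance : Inv MG := ⟨fun x => ⟨x.g⁻¹, -(MonoidAlgebra.single x.g⁻¹ 1 * x.d)⟩⟩

lemma MG.mul_def (x y : MG) :
    x * y = ⟨x.g * y.g, x.d + MonoidAlgebra.single x.g 1 * y.d⟩ := rfl
lemma MG.inv_def (x : MG) :
    x⁻¹ = ⟨x.g⁻¹, -(MonoidAlgebra.single x.g⁻¹ 1 * x.d)⟩ := rfl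
lemma MG.one_def : (1 : MG) = ⟨1, 0⟩ := rfl

noncomputable instance : Group MG where
  mul_assoc x y z := by
    ext : 1
    · simp [MG.mul_def, mul_assoc]
    · simp [MG.mul_def, mul_add, add_assoc]
      rw [← mul_assoc, MonoidAlgebra.single_mul_single, mul_one]
  one_mul x := by
    ext : 1 <;> simp [MG.mul_def, MG.one_def, ← MonoidAlgebra.one_def]
  mul_one x := by
    ext : 1 <;> simp [MG.mul_def, MG.one_def]
  inv_mul_cancel x := by
    ext : 1 <;> simp [MG.mul_def, MG.inv_def, MG.one_def]

noncomputable def phi : F2 →* MG :=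
  FreeGroup.lift fun x => if x then ⟨gA, 0⟩ else ⟨gB, 1⟩

lemma phi_fa : phi fa = ⟨gA, 0⟩ := by simp [phi, fa]
lemma phi_fb : phi fb = ⟨gB, 1⟩ := by simp [phi, fb]

lemma phi_fa_pow (n : ℕ) : phi (fa ^ n) = ⟨gA ^ n, 0⟩ := by
  induction n with
  | zero => simp [MG.one_def]
  | succ n ih =>
    rw [pow_succ, map_mul, ih, phi_fa, MG.mul_def]
    simp [pow_succ]

lemma phi_comm (n : ℕ) :
    phi ⁅fa ^ n, fb⁆ = ⟨1, MonoidAlgebra.single (gA ^ n) 1 - 1⟩ := by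
  rw [commutatorElement_def, map_mul, map_mul, map_mul, map_inv, map_inv,
    phi_fa_pow, phi_fb]
  ext : 1
  · simp [MG.mul_def, MG.inv_def]
  · simp [MG.mul_def, MG.inv_def, MonoidAlgebra.single_mul_single, mul_comm,
      ← MonoidAlgebra.one_def]
    abel

lemma phi_conj (f r : F2) (d : RR) (h : phi r = ⟨1, d⟩) :
    phi (f⁻¹ * r * f) = ⟨1, MonoidAlgebra.single (phi f).g⁻¹ 1 * d⟩ := by
  rw [map_mul, map_mul, map_inv, h]
  ext : 1
  · simp [MG.mul_def, MG.inv_def]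
  · simp [MG.mul_def, MG.inv_def, mul_add]

/-! ### The ℓ¹ norm -/

noncomputable def nu (x : RR) : ℕ := ∑ g ∈ x.coeff.support, (x.coeff g).natAbs

lemma nu_add_le (x y : RR) : nu (x + y) ≤ nu x + nu y := by
  classical
  have h1 : nu (x + y) ≤ ∑ g ∈ x.coeff.support ∪ y.coeff.support, ((x + y).coeff g).natAbs :=
    Finset.sum_le_sum_of_subset Finsupp.support_add
  have h2 : ∑ g ∈ x.coeff.support ∪ y.coeff.support, ((x + y).coeff g).natAbs ≤
      ∑ g ∈ x.coeff.support ∪ y.coeff.support, ((x.coeff g).natAbs + (y.coeff g).natAbs) := by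
    refine Finset.sum_le_sum fun g _ => ?_
    show ((x + y).coeff g).natAbs ≤ _
    have : (x + y).coeff g = x.coeff g + y.coeff g := rfl
    rw [this]
    exact Int.natAbs_add_le _ _
  have h3 : ∑ g ∈ x.coeff.support ∪ y.coeff.support, ((x.coeff g).natAbs + (y.coeff g).natAbs) = nu x + nu y := by
    rw [Finset.sum_add_distrib]
    congr 1
    · exact (Finset.sum_subset Finset.subset_union_left (fun g _ hg => by
        simp [Finsupp.notMem_support_iff.mp hg])).symm
    · exact (Finset.sum_subset Finset.subset_union_right (fun g _ hg => by
        simp [Finsupp.notMem_support_iff.mp hg])).symm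
  exact le_trans h1 (h2.trans h3.le)

lemma nu_single (g : G2') (c : ℤ) : nu (MonoidAlgebra.single g c) ≤ c.natAbs := by
  classical
  have h1 : nu (MonoidAlgebra.single g c) ≤
      ∑ x ∈ {g}, ((MonoidAlgebra.single g c : RR).coeff x).natAbs :=
    Finset.sum_le_sum_of_subset Finsupp.support_single_subset
  simpa [MonoidAlgebra.coeff_single, Finsupp.single_eq_same] using h1

lemma card_le_nu (x : RR) : x.coeff.support.card ≤ nu x := by
  rw [Finset.card_eq_sum_ones]
  refine Finset.sum_le_sum fun g hg => ?_
  exact Nat.one_le_iff_ne_zero.mpr (Int.natAbs_ne_zero.mpr (Finsupp.mem_support_iff.mp hg))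

/-! ### telescoping sum -/

lemma P_mul (n : ℕ) :
    (∑ j ∈ Finset.range n, MonoidAlgebra.single (gA ^ j) (1 : ℤ)) *
      (MonoidAlgebra.single gA 1 - 1) = MonoidAlgebra.single (gA ^ n) 1 - 1 := by
  induction n with
  | zero => simp [← MonoidAlgebra.one_def]
  | succ n ih =>
    rw [Finset.sum_range_succ, add_mul, ih, mul_sub, mul_one,
      MonoidAlgebra.single_mul_single, mul_one, ← pow_succ]
    abel

lemma P_apply (n j : ℕ) (hj : j < n) :
    (∑ i ∈ Finset.range n, MonoidAlgebra.single (gA ^ i) (1 : ℤ)).coeff (gA ^ j) = 1 := by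
  classical
  rw [MonoidAlgebra.coeff_sum, Finsupp.finset_sum_apply]
  have : ∀ i, ((MonoidAlgebra.single (gA ^ i) (1 : ℤ)) : RR).coeff (gA ^ j)
      = if i = j then 1 else 0 := by
    intro i
    rw [MonoidAlgebra.coeff_single, Finsupp.single_apply]
    split_ifs with h h' h'
    · rfl
    · exact absurd (gA_pow_inj h) h'
    · exact absurd (congrArg (gA ^ ·) h') h
    · rfl
  simp only [this]
  rw [Finset.sum_ite_eq' (Finset.range n) j (fun _ => (1 : ℤ))]
  simp [Finset.mem_range.mpr hj]

lemma n_le_nu_P (n : ℕ) :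
    n ≤ nu (∑ j ∈ Finset.range n, MonoidAlgebra.single (gA ^ j) (1 : ℤ)) := by
  classical
  set P : RR := ∑ j ∈ Finset.range n, MonoidAlgebra.single (gA ^ j) (1 : ℤ) with hP
  have hsub : (Finset.range n).image (fun j => gA ^ j) ⊆ P.coeff.support := by
    intro g hg
    obtain ⟨j, hj, rfl⟩ := Finset.mem_image.mp hg
    exact Finsupp.mem_support_iff.mpr (by rw [hP, P_apply n j (Finset.mem_range.mp hj)]; norm_num)
  have hcard : n ≤ P.coeff.support.card := by
    have := Finset.card_le_card hsub
    rwa [Finset.card_image_of_injective _ gA_pow_inj, Finset.card_range] at this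
  exact hcard.trans (card_le_nu P)

/-! ### list decomposition -/

lemma list_decomp (l : List F2)
    (hl : ∀ x ∈ l, ∃ f r : F2,
      (r ∈ ({⁅fa, fb⁆} : Set F2) ∨ r⁻¹ ∈ ({⁅fa, fb⁆} : Set F2)) ∧ x = f⁻¹ * r * f) :
    ∃ q : RR, nu q ≤ l.length ∧
      phi l.prod = ⟨1, q * (MonoidAlgebra.single gA 1 - 1)⟩ := by
  induction l with
  | nil => exact ⟨0, by simp [nu], by simp [MG.one_def]⟩
  | cons x l ih =>
    obtain ⟨q, hq, hprod⟩ := ih fun y hy => hl y (List.mem_cons_of_mem _ hy)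
    obtain ⟨f, r, hr, hx⟩ := hl x List.mem_cons_self
    have hc : phi ⁅fa, fb⁆ = ⟨1, MonoidAlgebra.single gA 1 - 1⟩ := by
      have := phi_comm 1
      simpa [pow_one] using this
    have key : ∃ ε : ℤ, ε.natAbs = 1 ∧
        phi x = ⟨1, MonoidAlgebra.single (phi f).g⁻¹ ε * (MonoidAlgebra.single gA 1 - 1)⟩ := by
      rcases hr with hr | hr
      · rw [Set.mem_singleton_iff] at hr
        subst hr
        refine ⟨1, rfl, ?_⟩
        rw [hx]
        exact phi_conj f _ _ hc
      · rw [Set.mem_singleton_iff] at hr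
        have hr' : r = ⁅fa, fb⁆⁻¹ := by rw [← hr, inv_inv]
        subst hr'
        refine ⟨-1, by norm_num, ?_⟩
        rw [hx]
        have hrc : phi ⁅fa, fb⁆⁻¹ = ⟨1, -(MonoidAlgebra.single gA 1 - 1)⟩ := by
          rw [map_inv, hc, MG.inv_def]
          simp [← MonoidAlgebra.one_def]
        rw [phi_conj f _ _ hrc]
        congr 1
        rw [mul_neg, ← neg_mul]
        congr 1
        simp [Finsupp.single_neg]
    obtain ⟨ε, hε, hphix⟩ := key
    refine ⟨MonoidAlgebra.single (phi f).g⁻¹ ε + q, ?_, ?_⟩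
    · calc nu (MonoidAlgebra.single (phi f).g⁻¹ ε + q)
          ≤ nu (MonoidAlgebra.single (phi f).g⁻¹ ε) + nu q := nu_add_le _ _
        _ ≤ 1 + l.length := by
            have := nu_single (phi f).g⁻¹ ε
            omega
        _ = (x :: l).length := by simp [add_comm]
    · rw [List.prod_cons, map_mul, hphix, hprod, MG.mul_def]
      ext : 1
      · simp
      · show _ + _ = _
        simp [← MonoidAlgebra.one_def, add_mul]

/-! ### the explicit list realizing the area -/

def L : ℕ → List F2
  | 0 => []
  | n + 1 => (fa ^ n * ⁅fa, fb⁆ * (fa ^ n)⁻¹) :: L n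

lemma L_length (n : ℕ) : (L n).length = n := by
  induction n with
  | zero => rfl
  | succ n ih => simp [L, ih]

lemma L_prod (n : ℕ) : (L n).prod = ⁅fa ^ n, fb⁆ := by
  induction n with
  | zero => simp [L]
  | succ n ih =>
    rw [L, List.prod_cons, ih, commutatorElement_def, commutatorElement_def]
    rw [pow_succ]
    group

lemma L_form (n : ℕ) : ∀ x ∈ L n, ∃ j : ℕ, x = fa ^ j * ⁅fa, fb⁆ * (fa ^ j)⁻¹ := by
  induction n with
  | zero => simp [L]
  | succ n ih =>
    intro x hx
    rw [L, List.mem_cons] at hx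
    rcases hx with rfl | hx
    · exact ⟨n, rfl⟩
    · exact ih x hx

/-! ### main theorem -/

theorem area_of_commutator_power (n : ℕ) (hn : 1 ≤ n) :
    abMap ⁅fa ^ n, fb⁆ = 1 ∧
    ⁅fa ^ n, fb⁆ ∈ Subgroup.normalClosure {⁅fa, fb⁆} ∧
    relArea {⁅fa, fb⁆} ⁅fa ^ n, fb⁆ = n := by
  have hmemL : ∀ x ∈ L n, ∃ f r : F2,
      (r ∈ ({⁅fa, fb⁆} : Set F2) ∨ r⁻¹ ∈ ({⁅fa, fb⁆} : Set F2)) ∧ x = f⁻¹ * r * f := by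
    intro x hx
    obtain ⟨j, rfl⟩ := L_form n x hx
    exact ⟨(fa ^ j)⁻¹, ⁅fa, fb⁆, Or.inl rfl, by group⟩
  have hmem : (L n).length = n ∧ _ ∧ (L n).prod = ⁅fa ^ n, fb⁆ :=
    ⟨L_length n, hmemL, L_prod n⟩
  refine ⟨?_, ?_, ?_⟩
  · rw [map_commutatorElement]
    exact commutatorElement_eq_one_iff_commute.mpr (mul_comm _ _)
  · rw [← L_prod n]
    refine Subgroup.list_prod_mem _ fun x hx => ?_
    obtain ⟨j, rfl⟩ := L_form n x hx
    exact (Subgroup.normalClosure_normal).conj_mem _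
      (Subgroup.subset_normalClosure (Set.mem_singleton _)) _
  · have hin : n ∈ {k | ∃ l : List F2, l.length = k ∧
        (∀ x ∈ l, ∃ f r : F2, (r ∈ ({⁅fa, fb⁆} : Set F2) ∨ r⁻¹ ∈ ({⁅fa, fb⁆} : Set F2)) ∧
          x = f⁻¹ * r * f) ∧ l.prod = ⁅fa ^ n, fb⁆} :=
      ⟨L n, L_length n, hmemL, L_prod n⟩
    refine Nat.le_antisymm (Nat.sInf_le hin) (le_csInf ⟨n, hin⟩ ?_)
    rintro k ⟨l, rfl, hform, hprod⟩
    obtain ⟨q, hq, hphi⟩ := list_decomp l hform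
    rw [hprod, phi_comm n] at hphi
    have hd : q * (MonoidAlgebra.single gA 1 - 1)
        = MonoidAlgebra.single (gA ^ n) 1 - 1 := congrArg MG.d hphi.symm
    have hd0 : (MonoidAlgebra.single gA 1 - 1 : RR) ≠ 0 := by
      intro h
      rw [sub_eq_zero, MonoidAlgebra.one_def] at h
      rcases (Finsupp.single_eq_single_iff _ _ _ _).mp (congrArg MonoidAlgebra.coeff h) with ⟨h1, _⟩ | ⟨h1, _⟩
      · exact gA_ne_one h1
      · norm_num at h1
    have hqP : q = ∑ j ∈ Finset.range n, MonoidAlgebra.single (gA ^ j) (1 : ℤ) :=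
      mul_right_cancel₀ hd0 (by rw [hd, P_mul])
    calc n ≤ nu q := hqP ▸ n_le_nu_P n
      _ ≤ l.length := hq
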